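/- arXiv:0809.1685 — 12 statements merged into one kernel-verified Lean document; each statement's English description precedes it below -/
import Mathlib

section
/- Let (X, d) be a one-dimensional infrastructure of circumference R > 0. Then the map d̂ : fRep(X, d) → ℝ/Rℤ defined by d̂(x, t) = d(x) + (t mod R) is a bijection. -/
/-- Let `(X, d)` be a one-dimensional infrastructure of circumference `R > 0`,
i.e. a finite nonempty set `X` with an injective map `d : X → ℝ/Rℤ`. Then the map
`d̂ : fRep(X, d) → ℝ/Rℤ`, `(x, t) ↦ d(x) + t`, is a bijection, where `fRep(X, d)` is the set of
pairs `(x, t) ∈ X × ℝ` with `0 ≤ t < R` such that `d(x)` is the only point of `d(X)` on the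
circle segment `[d(x), d(x) + t]`. -/
theorem stmt0 {X : Type*} [Fintype X] [Nonempty X] {R : ℝ} (hR : 0 < R)
    (d : X → AddCircle R) (hd : Function.Injective d) :
    Function.Bijective
      (fun p : {p : X × ℝ // 0 ≤ p.2 ∧ p.2 < R ∧
          ∀ (y : X) (u : ℝ), 0 ≤ u → u ≤ p.2 →
            d y = d p.1 + (u : AddCircle R) → y = p.1} =>
        d p.val.1 + ((p.val.2 : ℝ) : AddCircle R)) := by
  haveI : Fact (0 < R) := ⟨hR⟩
  have hIco : ∀ r : ℝ, 0 ≤ r → r < R → r ∈ Set.Ico (0 : ℝ) (0 + R) :=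
    fun r h1 h2 => ⟨h1, by linarith⟩
  constructor
  · -- injectivity
    have key : ∀ p q : {p : X × ℝ // 0 ≤ p.2 ∧ p.2 < R ∧
          ∀ (y : X) (u : ℝ), 0 ≤ u → u ≤ p.2 →
            d y = d p.1 + (u : AddCircle R) → y = p.1},
        d p.val.1 + ((p.val.2 : ℝ) : AddCircle R) = d q.val.1 + ((q.val.2 : ℝ) : AddCircle R) →
        p.val.2 ≤ q.val.2 → p = q := by
      rintro ⟨⟨x, t⟩, ht0, htR, hp⟩ ⟨⟨x', t'⟩, ht0', htR', hq⟩ heq hle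
      simp only at heq hle ht0 htR ht0' htR' ⊢
      have hx : d x = d x' + ((t' - t : ℝ) : AddCircle R) := by
        rw [QuotientAddGroup.mk_sub, ← add_sub_assoc, ← heq]
        abel
      have hxx : x = x' := hq x (t' - t) (by linarith) (by simpa using sub_le_self t' ht0) hx
      subst hxx
      have htt : ((t : ℝ) : AddCircle R) = ((t' : ℝ) : AddCircle R) := add_left_cancel heq
      have : t = t' :=
        (AddCircle.coe_eq_coe_iff_of_mem_Ico (hIco t ht0 htR) (hIco t' ht0' htR')).mp htt
      simp [this]
    intro p q heq
    rcases le_total p.val.2 q.val.2 with h | h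
    · exact key p q heq h
    · exact (key q p heq.symm h).symm
  · -- surjectivity
    intro s
    set u : X → ℝ := fun y => ((AddCircle.equivIco R 0 (s - d y)) : ℝ) with hu
    have hmem : ∀ y, u y ∈ Set.Ico (0 : ℝ) (0 + R) := fun y => (AddCircle.equivIco R 0 (s - d y)).2
    have hcoe : ∀ y, ((u y : ℝ) : AddCircle R) = s - d y := fun y =>
      (AddCircle.equivIco R 0).symm_apply_apply (s - d y)
    obtain ⟨x, _, hx⟩ := Finset.exists_min_image Finset.univ u
      ⟨Classical.arbitrary X, Finset.mem_univ _⟩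
    have hx' : ∀ y, u x ≤ u y := fun y => hx y (Finset.mem_univ y)
    refine ⟨⟨⟨x, u x⟩, (hmem x).1, by have := (hmem x).2; linarith, ?_⟩, ?_⟩
    · intro y v hv0 hv hy
      by_contra hne
      simp only at hy hv hne
      have h1 : ((u x - v : ℝ) : AddCircle R) = s - d y := by
        rw [QuotientAddGroup.mk_sub, hcoe x, hy]
        abel
      have h2 : u y = u x - v := by
        have hmemv : u x - v ∈ Set.Ico (0 : ℝ) (0 + R) :=
          ⟨by linarith, by have := (hmem x).2; linarith⟩
        have := hcoe y
        rw [← h1] at this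
        exact (AddCircle.coe_eq_coe_iff_of_mem_Ico (hmem y) hmemv).mp this
      have hv0' : v = 0 := by have := hx' y; linarith
      have : d y = d x := by rw [hy, hv0']; simp
      exact hne (hd this)
    · simp only
      rw [hcoe x]
      abel
end

section
/- Let (X, d) be a one-dimensional infrastructure of circumference R > 0 with |X| ≥ 2, with baby step map bs and giant step map gs. Define d_max := max over x ∈ X of the unique representative in (0, R) of d(bs(x)) − d(x). Then for all x, y ∈ X, the unique representative ε ∈ [0, R) of d(x) + d(y) − d(gs(x, y)) satisfies 0 ≤ ε < d_max; in particular d(gs(x, y)) = d(x) + d(y) − ε with 0 ≤ ε < d_max. -/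
/-- Let `(X, d)` be a one-dimensional infrastructure of circumference `R > 0`
with `|X| ≥ 2`, with baby step map `bs` (with distances `δ x ∈ (0, R)` representing
`d(bs x) − d(x)`) and giant step map `gs`. Let `d_max` be the maximum of the `δ x`.
Then for all `x, y ∈ X` the unique representative `ε ∈ [0, R)` of `d(x) + d(y) − d(gs(x, y))`
satisfies `0 ≤ ε < d_max`; in particular `d(gs(x, y)) = d(x) + d(y) − ε`. -/
theorem stmt3 {X : Type*} [Fintype X] {R : ℝ} (hR : 0 < R)
    (hX : 2 ≤ Fintype.card X)
    (d : X → AddCircle R) (hd : Function.Injective d)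
    (bs : X → X) (gs : X → X → X) (δ : X → ℝ)
    (hδ : ∀ x : X, 0 < δ x ∧ δ x < R ∧ ((δ x : ℝ) : AddCircle R) = d (bs x) - d x)
    (hbs : ∀ x : X, bs x ≠ x ∧
      ∀ (z : X) (u : ℝ), 0 ≤ u → u ≤ δ x → d z = d x + ((u : ℝ) : AddCircle R) →
        z = x ∨ z = bs x)
    (hgs : ∀ x y : X, ∃ τ : ℝ, 0 ≤ τ ∧ τ < R ∧
      ((τ : ℝ) : AddCircle R) = (d x + d y) - d (gs x y) ∧
      ∀ (w : X) (u : ℝ), 0 ≤ u → u ≤ τ → d w = d (gs x y) + ((u : ℝ) : AddCircle R) →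
        w = gs x y)
    (dmax : ℝ) (hdmax : IsGreatest (Set.range δ) dmax) :
    ∀ x y : X, ∀ ε : ℝ, 0 ≤ ε → ε < R →
      ((ε : ℝ) : AddCircle R) = (d x + d y) - d (gs x y) →
      ε < dmax ∧ d (gs x y) = d x + d y - ((ε : ℝ) : AddCircle R) := by
  haveI : Fact (0 < R) := ⟨hR⟩
  intro x y ε hε0 hεR hεeq
  obtain ⟨τ, hτ0, hτR, hτeq, hτmax⟩ := hgs x y
  have hετ : ε = τ := by
    have h : ((ε : ℝ) : AddCircle R) = ((τ : ℝ) : AddCircle R) := hεeq.trans hτeq.symm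
    have := (AddCircle.coe_eq_coe_iff_of_mem_Ico (hp := ⟨hR⟩) (a := (0:ℝ))
      (x := ε) (y := τ) ⟨by simpa using hε0, by simpa using hεR⟩
      ⟨by simpa using hτ0, by simpa using hτR⟩).mp h
    exact this
  constructor
  · by_contra hlt
    push_neg at hlt
    set z := gs x y with hz
    have hδz : δ z ≤ dmax := hdmax.2 ⟨z, rfl⟩
    have hδτ : δ z ≤ τ := by linarith [hετ]
    have hdb : d (bs z) = d z + ((δ z : ℝ) : AddCircle R) := by
      have := (hδ z).2.2
      rw [this]; abel
    have := hτmax (bs z) (δ z) (le_of_lt (hδ z).1) hδτ hdb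
    exact (hbs z).1 this
  · rw [hεeq]; abel
end

section
/- Let K be a number field having at least one real infinite place, and let 𝔟 be a reduced nonzero fractional ideal of 𝒪_K. Then {h ∈ 𝔟 : w(h) ≤ 1 for all infinite places w of K} = {−1, 0, 1}. -/
open NumberField
open scoped nonZeroDivisors

/-- A nonzero fractional ideal `𝔟` of the ring of integers of a number field `K` is *reduced*
if `1 ∈ 𝔟` and `1` is a minimum of `𝔟`, i.e. every `h ∈ 𝔟` with `w(h) ≤ 1` for all infinite
places `w` is `0` or has `w(h) = 1` for all infinite places `w`. -/
def IsReducedIdeal {K : Type*} [Field K] [NumberField K]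
    (𝔟 : FractionalIdeal (𝓞 K)⁰ K) : Prop :=
  (1 : K) ∈ 𝔟 ∧ ∀ h : K, h ∈ 𝔟 → (∀ w : InfinitePlace K, w h ≤ 1) →
    h = 0 ∨ ∀ w : InfinitePlace K, w h = 1

/-- Let `K` be a number field having at least one real infinite place, and let
`𝔟` be a reduced nonzero fractional ideal of `𝒪_K`. Then
`{h ∈ 𝔟 : w(h) ≤ 1 for all infinite places w} = {−1, 0, 1}`. -/
theorem stmt5 {K : Type*} [Field K] [NumberField K]
    (hreal : ∃ w : InfinitePlace K, w.IsReal)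
    (𝔟 : FractionalIdeal (𝓞 K)⁰ K) (h𝔟 : 𝔟 ≠ 0)
    (hred : IsReducedIdeal 𝔟) :
    {h : K | h ∈ 𝔟 ∧ ∀ w : InfinitePlace K, w h ≤ 1} = {-1, 0, 1} := by
  obtain ⟨w₀, hw₀⟩ := hreal
  ext h
  simp only [Set.mem_setOf_eq, Set.mem_insert_iff, Set.mem_singleton_iff]
  constructor
  · rintro ⟨hmem, hle⟩
    rcases hred.2 h hmem hle with h0 | hall
    · exact Or.inr (Or.inl h0)
    · -- use the real place
      have hφ : NumberField.ComplexEmbedding.IsReal w₀.embedding :=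
        NumberField.InfinitePlace.isReal_iff.mp hw₀
      set φ := w₀.embedding with hφdef
      have hz : ‖φ h‖ = 1 := by
        have := hall w₀
        rwa [← NumberField.InfinitePlace.norm_embedding_eq] at this
      have hre : (starRingEnd ℂ) (φ h) = φ h := by
        have := RingHom.congr_fun hφ h
        exact this
      have him : (φ h).im = 0 := by
        have := Complex.conj_eq_iff_im.mp hre
        exact this
      have habs : |(φ h).re| = 1 := by
        rw [Complex.norm_def, Complex.normSq_apply, him] at hz
        have h1 : (φ h).re * (φ h).re + 0 * 0 = 1 := by
          have := Real.sqrt_eq_one.mp hz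
          linarith
        nlinarith [abs_nonneg (φ h).re, sq_abs (φ h).re]
      rcases abs_eq (by norm_num : (0:ℝ) ≤ 1) |>.mp habs with h1 | h1
      · right; right
        have : φ h = φ 1 := by
          apply Complex.ext <;> simp [h1, him]
        exact φ.injective this
      · left
        have : φ h = φ (-1) := by
          apply Complex.ext <;> simp [h1, him]
        exact φ.injective this
  · have hm1 : (-1 : K) ∈ 𝔟 := by
      have h' : (-1 : K) ∈ (𝔟 : Submodule (𝓞 K) K) :=
        Submodule.neg_mem _ hred.1
      exact h'
    have h0 : (0 : K) ∈ 𝔟 := by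
      have : (0 : K) ∈ (𝔟 : Submodule (𝓞 K) K) := zero_mem _
      exact this
    rintro (rfl | rfl | rfl)
    · exact ⟨hm1, fun w => by rw [show w (-1:K) = w 1 from w.1.map_neg 1, map_one]⟩
    · exact ⟨h0, fun w => by rw [show w (0:K) = 0 from w.1.map_zero]; norm_num⟩
    · exact ⟨hred.1, fun w => by rw [map_one]⟩
end

section
/- Let K be a number field having at least one real infinite place, and let 𝔟 and 𝔟' be reduced nonzero fractional ideals of 𝒪_K. If there exists h ∈ K^* with 𝔟 = h𝔟' and w(h) = 1 for all infinite places w of K, then 𝔟 = 𝔟'. -/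
open NumberField
open scoped nonZeroDivisors

/-- Let `K` be a number field having at least one real infinite place, and let
`𝔟`, `𝔟'` be reduced nonzero fractional ideals of `𝒪_K`. If there is `h ∈ K^*` with `𝔟 = h𝔟'`
and `w(h) = 1` for all infinite places `w`, then `𝔟 = 𝔟'`. -/
theorem stmt6 {K : Type*} [Field K] [NumberField K]
    (hreal : ∃ w : InfinitePlace K, w.IsReal)
    (𝔟 𝔟' : FractionalIdeal (𝓞 K)⁰ K) (h𝔟 : 𝔟 ≠ 0) (h𝔟' : 𝔟' ≠ 0)
    (hred : IsReducedIdeal 𝔟) (hred' : IsReducedIdeal 𝔟')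
    (h : K) (hh : h ≠ 0)
    (heq : 𝔟 = FractionalIdeal.spanSingleton (𝓞 K)⁰ h * 𝔟')
    (habs : ∀ w : InfinitePlace K, w h = 1) :
    𝔟 = 𝔟' := by
  obtain ⟨w, hw⟩ := hreal
  have h1 : ‖InfinitePlace.embedding_of_isReal hw h‖ = 1 := by
    rw [InfinitePlace.norm_embedding_of_isReal, habs]
  have hinj := (InfinitePlace.embedding_of_isReal hw).injective
  have hpm : h = 1 ∨ h = -1 := by
    rcases abs_eq (by norm_num : (0:ℝ) ≤ 1) |>.mp (by simpa using h1) with h2 | h2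
    · left; apply hinj; simpa using h2
    · right; apply hinj; simpa using h2
  have hspan : FractionalIdeal.spanSingleton (𝓞 K)⁰ h = 1 := by
    rcases hpm with rfl | rfl
    · exact FractionalIdeal.spanSingleton_one
    · rw [← FractionalIdeal.spanSingleton_one (S := (𝓞 K)⁰)]
      exact FractionalIdeal.spanSingleton_eq_spanSingleton.mpr ⟨-1, by simp⟩
  rw [heq, hspan, one_mul]
end

section
/- Let K be a number field and let 𝔟 and 𝔟' be reduced nonzero fractional ideals of 𝒪_K. Then the following are equivalent: (i) there exists h ∈ K^* with 𝔟 = h𝔟' and w(h) = 1 for all infinite places w of K; (ii) there exists a nonzero element h ∈ 𝔟·𝔟'⁻¹ with w(h) ≤ 1 for all infinite places w of K, and the absolute norms of 𝔟 and 𝔟' are equal. -/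
open NumberField
open scoped nonZeroDivisors

/-- If all infinite places of `h` are `1`, then `|N(h)| = 1`. -/
lemma abs_norm_eq_one_of_places_eq_one {K : Type*} [Field K] [NumberField K]
    {h : K} (hw : ∀ w : InfinitePlace K, w h = 1) : |Algebra.norm ℚ h| = 1 := by
  have := NumberField.InfinitePlace.prod_eq_abs_norm h
  simp only [hw, one_pow, Finset.prod_const_one] at this
  exact_mod_cast this.symm

/-- The absolute norm of `spanSingleton h` for `h` with all places equal to one is `1`. -/
lemma absNorm_spanSingleton_eq_one {K : Type*} [Field K] [NumberField K]
    {h : K} (hw : ∀ w : InfinitePlace K, w h = 1) :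
    FractionalIdeal.absNorm (FractionalIdeal.spanSingleton (𝓞 K)⁰ h) = 1 := by
  rw [FractionalIdeal.absNorm_span_singleton]
  exact_mod_cast abs_norm_eq_one_of_places_eq_one hw

/-- An integral fractional ideal with absolute norm one is the unit ideal. -/
lemma eq_one_of_le_one_of_absNorm_eq_one {K : Type*} [Field K] [NumberField K]
    {I : FractionalIdeal (𝓞 K)⁰ K} (hle : I ≤ 1)
    (hnorm : FractionalIdeal.absNorm I = 1) : I = 1 := by
  obtain ⟨J, rfl⟩ := FractionalIdeal.le_one_iff_exists_coeIdeal.mp hle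
  rw [FractionalIdeal.coeIdeal_absNorm] at hnorm
  have : Ideal.absNorm J = 1 := by exact_mod_cast hnorm
  rw [Ideal.absNorm_eq_one_iff.mp this]
  simp

/-- Let `K` be a number field and `𝔟`, `𝔟'` reduced nonzero fractional ideals
of `𝒪_K`. The following are equivalent: (i) there exists `h ∈ K^*` with `𝔟 = h𝔟'` and
`w(h) = 1` for all infinite places `w`; (ii) there exists a nonzero `h ∈ 𝔟·𝔟'⁻¹` with
`w(h) ≤ 1` for all infinite places `w`, and the absolute norms of `𝔟` and `𝔟'` agree. -/
theorem stmt7 {K : Type*} [Field K] [NumberField K]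
    (𝔟 𝔟' : FractionalIdeal (𝓞 K)⁰ K) (h𝔟 : 𝔟 ≠ 0) (h𝔟' : 𝔟' ≠ 0)
    (hred : IsReducedIdeal 𝔟) (hred' : IsReducedIdeal 𝔟') :
    (∃ h : K, h ≠ 0 ∧ 𝔟 = FractionalIdeal.spanSingleton (𝓞 K)⁰ h * 𝔟' ∧
      ∀ w : InfinitePlace K, w h = 1) ↔
    ((∃ h : K, h ∈ 𝔟 * 𝔟'⁻¹ ∧ h ≠ 0 ∧ ∀ w : InfinitePlace K, w h ≤ 1) ∧
      FractionalIdeal.absNorm 𝔟 = FractionalIdeal.absNorm 𝔟') := by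
  constructor
  · rintro ⟨h, hne, heq, hw⟩
    have hspan : 𝔟 * 𝔟'⁻¹ = FractionalIdeal.spanSingleton (𝓞 K)⁰ h := by
      rw [heq, mul_assoc, mul_inv_cancel₀ h𝔟', mul_one]
    refine ⟨⟨h, ?_, hne, fun w => (hw w).le⟩, ?_⟩
    · rw [hspan]
      exact FractionalIdeal.mem_spanSingleton_self _ _
    · rw [heq, map_mul, absNorm_spanSingleton_eq_one hw, one_mul]
  · rintro ⟨⟨h, hmem, hne, hle⟩, hnorm⟩
    -- `spanSingleton h * 𝔟' ≤ 𝔟`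
    have hss : FractionalIdeal.spanSingleton (𝓞 K)⁰ h ≤ 𝔟 * 𝔟'⁻¹ :=
      FractionalIdeal.spanSingleton_le_iff_mem.mpr hmem
    have hsub : FractionalIdeal.spanSingleton (𝓞 K)⁰ h * 𝔟' ≤ 𝔟 := by
      calc FractionalIdeal.spanSingleton (𝓞 K)⁰ h * 𝔟' ≤ 𝔟 * 𝔟'⁻¹ * 𝔟' :=
            mul_left_mono (a := 𝔟') hss
        _ = 𝔟 := by rw [mul_assoc, inv_mul_cancel₀ h𝔟', mul_one]
    -- `h ∈ 𝔟`, so by reducedness `w h = 1` for all `w`.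
    have hh𝔟 : h ∈ 𝔟 := by
      have : h ∈ FractionalIdeal.spanSingleton (𝓞 K)⁰ h * 𝔟' := by
        have := FractionalIdeal.mul_mem_mul
          (FractionalIdeal.mem_spanSingleton_self (𝓞 K)⁰ h) hred'.1
        simpa using this
      exact hsub this
    have hw : ∀ w : InfinitePlace K, w h = 1 :=
      (hred.2 h hh𝔟 hle).resolve_left hne
    refine ⟨h, hne, ?_, hw⟩
    -- consider `J = spanSingleton h * 𝔟' * 𝔟⁻¹ ≤ 1` with norm one
    set J := FractionalIdeal.spanSingleton (𝓞 K)⁰ h * 𝔟' * 𝔟⁻¹ with hJ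
    have hJle : J ≤ 1 := by
      calc J ≤ 𝔟 * 𝔟⁻¹ := mul_left_mono (a := 𝔟⁻¹) hsub
        _ = 1 := mul_inv_cancel₀ h𝔟
    have h𝔟norm : FractionalIdeal.absNorm 𝔟 ≠ 0 :=
      fun hc => h𝔟 (FractionalIdeal.absNorm_eq_zero_iff.mp hc)
    have hJnorm : FractionalIdeal.absNorm J = 1 := by
      rw [hJ, map_mul, map_mul, absNorm_spanSingleton_eq_one hw, one_mul, ← hnorm,
        map_inv₀, mul_inv_cancel₀ h𝔟norm]
    have : J = 1 := eq_one_of_le_one_of_absNorm_eq_one hJle hJnorm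
    have := congr_arg (· * 𝔟) this
    simp only [hJ, one_mul] at this
    rw [mul_assoc, inv_mul_cancel₀ h𝔟, mul_one] at this
    exact this.symm
end

section
/- Let K be a number field, S its set of infinite places, and fix a distinguished infinite place w₀ ∈ S. Let 𝔞 be a nonzero fractional ideal of 𝒪_K and let μ, μ' ∈ K^* be such that the fractional ideals (1/μ)𝔞 and (1/μ')𝔞 are both reduced. If there exists a unit ε ∈ 𝒪_K^* such that w(μ) = w(εμ') for all w ∈ S ∖ {w₀}, then there exists h ∈ K^* with (1/μ)𝔞 = h·(1/μ')𝔞 and w(h) = 1 for all w ∈ S. -/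
open NumberField
open scoped nonZeroDivisors

/-- Let `K` be a number field, `S` its infinite places, `w₀ ∈ S`
distinguished. Let `𝔞` be a nonzero fractional ideal and `μ, μ' ∈ K^*` with `(1/μ)𝔞` and
`(1/μ')𝔞` both reduced. If there is a unit `ε ∈ 𝒪_K^*` with `w(μ) = w(εμ')` for all
`w ∈ S ∖ {w₀}`, then there is `h ∈ K^*` with `(1/μ)𝔞 = h·(1/μ')𝔞` and `w(h) = 1` for all
`w ∈ S`. -/
theorem stmt8 {K : Type*} [Field K] [NumberField K]
    (w₀ : InfinitePlace K)
    (𝔞 : FractionalIdeal (𝓞 K)⁰ K) (h𝔞 : 𝔞 ≠ 0)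
    (μ μ' : K) (hμ : μ ≠ 0) (hμ' : μ' ≠ 0)
    (hred : IsReducedIdeal (FractionalIdeal.spanSingleton (𝓞 K)⁰ μ⁻¹ * 𝔞))
    (hred' : IsReducedIdeal (FractionalIdeal.spanSingleton (𝓞 K)⁰ μ'⁻¹ * 𝔞))
    (hε : ∃ ε : (𝓞 K)ˣ, ∀ w : InfinitePlace K, w ≠ w₀ →
      w μ = w ((algebraMap (𝓞 K) K ε) * μ')) :
    ∃ h : K, h ≠ 0 ∧
      FractionalIdeal.spanSingleton (𝓞 K)⁰ μ⁻¹ * 𝔞 =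
        FractionalIdeal.spanSingleton (𝓞 K)⁰ h *
          (FractionalIdeal.spanSingleton (𝓞 K)⁰ μ'⁻¹ * 𝔞) ∧
      ∀ w : InfinitePlace K, w h = 1 := by
  obtain ⟨ε, hεw⟩ := hε
  set e : K := algebraMap (𝓞 K) K ε with he
  have heK : e ≠ 0 := by
    simpa [he] using (map_ne_zero_iff _ (NoZeroSMulDivisors.algebraMap_injective (𝓞 K) K)).2 ε.ne_zero
  set h : K := e * μ' * μ⁻¹ with hh
  have hne : h ≠ 0 := by
    simp [hh, heK, hμ, hμ']
  -- the key ideal identity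
  have hspan : FractionalIdeal.spanSingleton (𝓞 K)⁰ h *
      FractionalIdeal.spanSingleton (𝓞 K)⁰ μ'⁻¹ =
      FractionalIdeal.spanSingleton (𝓞 K)⁰ μ⁻¹ := by
    rw [FractionalIdeal.spanSingleton_mul_spanSingleton,
      FractionalIdeal.spanSingleton_eq_spanSingleton]
    refine ⟨ε⁻¹, ?_⟩
    rw [Units.smul_def, Algebra.smul_def, hh]
    field_simp [he]
    rw [he]
    have h1 : (algebraMap (𝓞 K) K) ((ε⁻¹ : (𝓞 K)ˣ) : 𝓞 K) * (algebraMap (𝓞 K) K) (ε : 𝓞 K) = 1 := by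
      rw [← map_mul, Units.inv_mul, map_one]
    linear_combination h1
  have hideal : FractionalIdeal.spanSingleton (𝓞 K)⁰ μ⁻¹ * 𝔞 =
      FractionalIdeal.spanSingleton (𝓞 K)⁰ h *
        (FractionalIdeal.spanSingleton (𝓞 K)⁰ μ'⁻¹ * 𝔞) := by
    rw [← mul_assoc, hspan]
  -- values of h at places other than w₀
  have hval : ∀ w : InfinitePlace K, w ≠ w₀ → w h = 1 := by
    intro w hw
    have := hεw w hw
    have hwμ : w μ ≠ 0 := by simp [hμ]
    rw [hh, map_mul, map_mul, map_inv₀, ← map_mul, ← this]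
    field_simp
  refine ⟨h, hne, hideal, ?_⟩
  by_cases hcase : w₀ h ≤ 1
  · -- h ∈ (1/μ)𝔞, use minimality of 1 there
    have hmem : h ∈ FractionalIdeal.spanSingleton (𝓞 K)⁰ μ⁻¹ * 𝔞 := by
      rw [hideal]
      have : h * 1 ∈ FractionalIdeal.spanSingleton (𝓞 K)⁰ h *
          (FractionalIdeal.spanSingleton (𝓞 K)⁰ μ'⁻¹ * 𝔞) :=
        FractionalIdeal.mul_mem_mul (FractionalIdeal.mem_spanSingleton_self _ _) hred'.1
      simpa using this
    have hle : ∀ w : InfinitePlace K, w h ≤ 1 := by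
      intro w
      by_cases hw : w = w₀
      · subst hw; exact hcase
      · exact (hval w hw).le
    rcases hred.2 h hmem hle with h0 | hall
    · exact absurd h0 hne
    · exact hall
  · -- h⁻¹ ∈ (1/μ')𝔞, use minimality of 1 there
    have hmem : h⁻¹ ∈ FractionalIdeal.spanSingleton (𝓞 K)⁰ μ'⁻¹ * 𝔞 := by
      have hideal' : FractionalIdeal.spanSingleton (𝓞 K)⁰ μ'⁻¹ * 𝔞 =
          FractionalIdeal.spanSingleton (𝓞 K)⁰ h⁻¹ *
            (FractionalIdeal.spanSingleton (𝓞 K)⁰ μ⁻¹ * 𝔞) := by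
        rw [hideal, ← mul_assoc, FractionalIdeal.spanSingleton_mul_spanSingleton,
          inv_mul_cancel₀ hne, FractionalIdeal.spanSingleton_one, one_mul]
      rw [hideal']
      have : h⁻¹ * 1 ∈ FractionalIdeal.spanSingleton (𝓞 K)⁰ h⁻¹ *
          (FractionalIdeal.spanSingleton (𝓞 K)⁰ μ⁻¹ * 𝔞) :=
        FractionalIdeal.mul_mem_mul (FractionalIdeal.mem_spanSingleton_self _ _) hred.1
      simpa using this
    have hle : ∀ w : InfinitePlace K, w h⁻¹ ≤ 1 := by
      intro w
      rw [map_inv₀]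
      by_cases hw : w = w₀
      · subst hw
        exact inv_le_one_of_one_le₀ (le_of_not_ge hcase)
      · rw [hval w hw]; norm_num
    rcases hred'.2 h⁻¹ hmem hle with h0 | hall
    · exact absurd h0 (inv_ne_zero hne)
    · intro w
      have := hall w
      rw [map_inv₀, inv_eq_one] at this
      exact this
end

section
/- Let K be a number field and 𝔞 a nonzero fractional ideal of 𝒪_K. Then the set Red(𝔞) of reduced nonzero fractional ideals lying in the ideal class of 𝔞 (i.e., reduced fractional ideals of the form (1/μ)𝔞 with μ ∈ K^*) is finite. -/
open NumberField
open scoped nonZeroDivisors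

open NumberField.mixedEmbedding MeasureTheory

/-- Let `K` be a number field and `𝔞` a nonzero fractional ideal of `𝒪_K`.
Then the set `Red(𝔞)` of reduced fractional ideals in the ideal class of `𝔞`, i.e. of the
form `(1/μ)𝔞` with `μ ∈ K^*`, is finite. -/
theorem stmt9 {K : Type*} [Field K] [NumberField K]
    (𝔞 : FractionalIdeal (𝓞 K)⁰ K) (h𝔞 : 𝔞 ≠ 0) :
    {𝔟 : FractionalIdeal (𝓞 K)⁰ K |
      (∃ μ : K, μ ≠ 0 ∧ 𝔟 = FractionalIdeal.spanSingleton (𝓞 K)⁰ μ⁻¹ * 𝔞) ∧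
      IsReducedIdeal 𝔟}.Finite := by
  classical
  set C := volume (convexBodyLT K (fun _ => (1/2 : NNReal))) with hC
  have hC0 : C ≠ 0 := by
    rw [hC, convexBodyLT_volume]
    refine mul_ne_zero (by exact_mod_cast (convexBodyLTFactor_ne_zero K)) ?_
    exact ENNReal.coe_ne_zero.mpr
      (Finset.prod_ne_zero_iff.mpr fun w _ => pow_ne_zero _ (by norm_num))
  have hCtop : C ≠ ⊤ := by
    rw [hC, convexBodyLT_volume]
    exact ENNReal.mul_ne_top ENNReal.coe_ne_top (by simp [ENNReal.prod_ne_top])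
  set D := minkowskiBound K 1 with hD
  have hD0 : D ≠ 0 := (minkowskiBound_pos K 1).ne'
  have hDtop : D ≠ ⊤ := (minkowskiBound_lt_top K 1).ne
  set ε := (C / D).toReal with hε
  have hε0 : 0 < ε := ENNReal.toReal_pos (by simp [ENNReal.div_eq_zero_iff, hC0, hDtop])
    (ENNReal.div_lt_top hCtop hD0).ne
  set M := ⌈ε⁻¹⌉₊ with hM
  have hfin : Set.Finite ((fun J : Ideal (𝓞 K) =>
      ((J : FractionalIdeal (𝓞 K)⁰ K))⁻¹) '' {J | Ideal.absNorm J ≤ M}) :=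
    (Ideal.finite_setOf_absNorm_le M).image _
  refine hfin.subset ?_
  rintro 𝔟 ⟨⟨μ, hμ, rfl⟩, h1 , hmin⟩
  set 𝔟 := FractionalIdeal.spanSingleton (𝓞 K)⁰ μ⁻¹ * 𝔞 with h𝔟
  have h𝔟0 : 𝔟 ≠ 0 :=
    mul_ne_zero (FractionalIdeal.spanSingleton_ne_zero_iff.mpr (inv_ne_zero hμ)) h𝔞
  -- 𝔟⁻¹ is an integral ideal
  have hone : (1 : FractionalIdeal (𝓞 K)⁰ K) ≤ 𝔟 := FractionalIdeal.one_le.mpr h1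
  have hinvle : 𝔟⁻¹ ≤ 1 := by
    calc 𝔟⁻¹ = 𝔟⁻¹ * 1 := (mul_one _).symm
    _ ≤ 𝔟⁻¹ * 𝔟 := mul_le_mul_right hone _
    _ = 1 := inv_mul_cancel₀ h𝔟0
  obtain ⟨J, hJ⟩ := FractionalIdeal.le_one_iff_exists_coeIdeal.mp hinvle
  -- lower bound on absNorm 𝔟 via Minkowski
  set I : (FractionalIdeal (𝓞 K)⁰ K)ˣ := Units.mk0 𝔟 h𝔟0 with hI
  have hmink : C ≤ minkowskiBound K I := by
    by_contra hlt
    push_neg at hlt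
    obtain ⟨a, ha, ha0, haw⟩ := exists_ne_zero_mem_ideal_lt K I hlt
    have ha' : a ∈ 𝔟 := ha
    have hle : ∀ w : InfinitePlace K, w a ≤ 1 := fun w =>
      le_of_lt (lt_of_lt_of_le (haw w) (by norm_num))
    rcases hmin a ha' hle with h | h
    · exact ha0 h
    · have w := (inferInstance : Nonempty (InfinitePlace K)).some
      have := haw w
      rw [h w] at this
      norm_num at this
  have hmB : minkowskiBound K I = ENNReal.ofReal (FractionalIdeal.absNorm 𝔟) * D := by
    rw [minkowskiBound, volume_fundamentalDomain_fractionalIdealLatticeBasis, hD,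
      minkowskiBound, volume_fundamentalDomain_fractionalIdealLatticeBasis]
    have : FractionalIdeal.absNorm ((1 : (FractionalIdeal (𝓞 K)⁰ K)ˣ) : FractionalIdeal (𝓞 K)⁰ K)
        = 1 := by simp [FractionalIdeal.absNorm_one]
    rw [this]
    simp [mul_assoc, hI]
  -- deduce ε ≤ absNorm 𝔟
  have hεle : ε ≤ ((FractionalIdeal.absNorm 𝔟 : ℚ) : ℝ) := by
    have h1' : C / D ≤ ENNReal.ofReal (FractionalIdeal.absNorm 𝔟) := by
      rw [ENNReal.div_le_iff hD0 hDtop]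
      rw [hmB] at hmink
      exact hmink
    have := ENNReal.toReal_mono (by simp) h1'
    rwa [ENNReal.toReal_ofReal (by exact_mod_cast FractionalIdeal.absNorm_nonneg 𝔟)] at this
  have hN0 : (0:ℝ) < ((FractionalIdeal.absNorm 𝔟 : ℚ) : ℝ) := lt_of_lt_of_le hε0 hεle
  -- absNorm J = (absNorm 𝔟)⁻¹
  have hJnorm : ((Ideal.absNorm J : ℚ) : ℝ) = (((FractionalIdeal.absNorm 𝔟 : ℚ) : ℝ))⁻¹ := by
    have hmul : FractionalIdeal.absNorm 𝔟 * FractionalIdeal.absNorm 𝔟⁻¹ = 1 := by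
      rw [← map_mul, mul_inv_cancel₀ h𝔟0, FractionalIdeal.absNorm_one]
    have : FractionalIdeal.absNorm ((J : FractionalIdeal (𝓞 K)⁰ K)) =
        (FractionalIdeal.absNorm 𝔟)⁻¹ := by
      rw [hJ]; exact eq_inv_of_mul_eq_one_right hmul
    rw [FractionalIdeal.coeIdeal_absNorm] at this
    rw [this]
    push_cast
    ring
  have hJle : Ideal.absNorm J ≤ M := by
    have : ((Ideal.absNorm J : ℚ) : ℝ) ≤ (M : ℝ) := by
      rw [hJnorm]
      calc (((FractionalIdeal.absNorm 𝔟 : ℚ) : ℝ))⁻¹ ≤ ε⁻¹ :=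
            inv_anti₀ hε0 hεle
        _ ≤ (M : ℝ) := Nat.le_ceil _
    exact_mod_cast this
  refine ⟨J, hJle, ?_⟩
  show ((J : FractionalIdeal (𝓞 K)⁰ K))⁻¹ = 𝔟
  rw [hJ, inv_inv]
end

section
/- Let K be a number field and 𝔞 a nonzero fractional ideal of 𝒪_K. Then there exists a nonzero element μ ∈ 𝔞 that is a minimum of 𝔞; consequently the fractional ideal (1/μ)𝔞 is reduced, and the set of reduced fractional ideals in the ideal class of 𝔞 is nonempty. -/
open NumberField
open scoped nonZeroDivisors

/-- A nonzero element `μ` of a fractional ideal `𝔞` of the ring of integers of a number field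
`K` is a *minimum* of `𝔞` if every `h ∈ 𝔞` with `w(h) ≤ w(μ)` for all infinite places `w` is
`0` or satisfies `w(h) = w(μ)` for all infinite places `w`. -/
def IsMinimumOf {K : Type*} [Field K] [NumberField K]
    (𝔞 : FractionalIdeal (𝓞 K)⁰ K) (μ : K) : Prop :=
  μ ∈ 𝔞 ∧ μ ≠ 0 ∧ ∀ h : K, h ∈ 𝔞 → (∀ w : InfinitePlace K, w h ≤ w μ) →
    h = 0 ∨ ∀ w : InfinitePlace K, w h = w μ

/-- Auxiliary lemma: every nonzero fractional ideal has a minimum. -/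
theorem exists_isMinimumOf {K : Type*} [Field K] [NumberField K]
    (𝔞 : FractionalIdeal (𝓞 K)⁰ K) (h𝔞 : 𝔞 ≠ 0) : ∃ μ : K, IsMinimumOf 𝔞 μ := by
  -- pick a nonzero element x of 𝔞
  have hx : ∃ x ∈ 𝔞, x ≠ (0 : K) := by
    by_contra hc
    push_neg at hc
    exact h𝔞 (FractionalIdeal.eq_zero_iff.mpr hc)
  obtain ⟨x, hx𝔞, hx0⟩ := hx
  -- a denominator for 𝔞
  obtain ⟨d, hd, hdint⟩ := 𝔞.isFractional
  have hdK : (algebraMap (𝓞 K) K) d ≠ 0 := by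
    simpa using nonZeroDivisors.ne_zero hd
  -- the set of nonzero elements of 𝔞 dominated by x at all places
  set T : Set K := {h : K | h ∈ 𝔞 ∧ h ≠ 0 ∧ ∀ w : InfinitePlace K, w h ≤ w x} with hT
  have hxT : x ∈ T := ⟨hx𝔞, hx0, fun w => le_rfl⟩
  -- T is finite
  have : Nonempty (InfinitePlace K) := inferInstance
  set B : ℝ := Finset.univ.sup' Finset.univ_nonempty
      (fun w : InfinitePlace K => w (algebraMap (𝓞 K) K d) * w x) with hB
  have hTfin : T.Finite := by
    have hfin := NumberField.Embeddings.finite_of_norm_le K ℂ B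
    have hsub : T ⊆ (fun h : K => (algebraMap (𝓞 K) K d) * h) ⁻¹'
        {y : K | IsIntegral ℤ y ∧ ∀ φ : K →+* ℂ, ‖φ y‖ ≤ B} := by
      rintro h ⟨h𝔞', _, hle⟩
      obtain ⟨y, hy⟩ := hdint h h𝔞'
      have hyeq : (algebraMap (𝓞 K) K) d * h = (algebraMap (𝓞 K) K) y := by
        rw [hy, Algebra.smul_def]
      simp only [Set.mem_preimage, Set.mem_setOf_eq]
      constructor
      · rw [hyeq]; exact NumberField.RingOfIntegers.isIntegral_coe y
      · intro φ
        have h1 : ‖φ ((algebraMap (𝓞 K) K d) * h)‖ =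
            (InfinitePlace.mk φ) (algebraMap (𝓞 K) K d) * (InfinitePlace.mk φ) h := by
          simp [InfinitePlace.apply, map_mul]
        rw [h1]
        calc (InfinitePlace.mk φ) (algebraMap (𝓞 K) K d) * (InfinitePlace.mk φ) h
            ≤ (InfinitePlace.mk φ) (algebraMap (𝓞 K) K d) * (InfinitePlace.mk φ) x :=
              mul_le_mul_of_nonneg_left (hle _) (apply_nonneg _ _)
          _ ≤ B := Finset.le_sup' (fun w : InfinitePlace K => w ((algebraMap (𝓞 K) K) d) * w x) (Finset.mem_univ _)
    refine (hfin.preimage ?_).subset hsub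
    intro a _ b _ hab
    exact mul_left_cancel₀ hdK hab
  -- pick μ in T minimizing the sum of the place values
  obtain ⟨μ, hμT, hμmin⟩ := Set.exists_min_image T
    (fun h => ∑ w : InfinitePlace K, w h) hTfin ⟨x, hxT⟩
  obtain ⟨hμ𝔞, hμ0, hμle⟩ := hμT
  refine ⟨μ, hμ𝔞, hμ0, fun h hh𝔞 hle => ?_⟩
  by_cases hh0 : h = 0
  · exact Or.inl hh0
  right
  have hhT : h ∈ T := ⟨hh𝔞, hh0, fun w => (hle w).trans (hμle w)⟩
  have hsum : (∑ w : InfinitePlace K, w μ) ≤ ∑ w : InfinitePlace K, w h := hμmin h hhT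
  intro w
  refine le_antisymm (hle w) ?_
  by_contra hcon
  push_neg at hcon
  have hlt : w h < w μ := hcon
  have : (∑ w : InfinitePlace K, w h) < ∑ w : InfinitePlace K, w μ :=
    Finset.sum_lt_sum (fun i _ => hle i) ⟨w, Finset.mem_univ w, hlt⟩
  exact absurd hsum (not_le.mpr this)

/-- Let `K` be a number field and `𝔞` a nonzero fractional ideal of `𝒪_K`.
Then `𝔞` has a nonzero minimum `μ`; consequently `(1/μ)𝔞` is reduced, and the set of reduced
fractional ideals in the ideal class of `𝔞` is nonempty. -/
theorem stmt10 {K : Type*} [Field K] [NumberField K]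
    (𝔞 : FractionalIdeal (𝓞 K)⁰ K) (h𝔞 : 𝔞 ≠ 0) :
    (∃ μ : K, IsMinimumOf 𝔞 μ ∧
      IsReducedIdeal (FractionalIdeal.spanSingleton (𝓞 K)⁰ μ⁻¹ * 𝔞)) ∧
    {𝔟 : FractionalIdeal (𝓞 K)⁰ K |
      (∃ μ : K, μ ≠ 0 ∧ 𝔟 = FractionalIdeal.spanSingleton (𝓞 K)⁰ μ⁻¹ * 𝔞) ∧
      IsReducedIdeal 𝔟}.Nonempty := by
  obtain ⟨μ, hmin⟩ := exists_isMinimumOf 𝔞 h𝔞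
  obtain ⟨hμ𝔞, hμ0, hμm⟩ := hmin
  have hμpos : ∀ w : InfinitePlace K, 0 < w μ :=
    fun w => InfinitePlace.pos_iff.mpr hμ0
  have hred : IsReducedIdeal (FractionalIdeal.spanSingleton (𝓞 K)⁰ μ⁻¹ * 𝔞) := by
    constructor
    · exact FractionalIdeal.mem_singleton_mul.mpr ⟨μ, hμ𝔞, (inv_mul_cancel₀ hμ0).symm⟩
    · intro h hh hle
      obtain ⟨y, hy𝔞, rfl⟩ := FractionalIdeal.mem_singleton_mul.mp hh
      have hwy : ∀ w : InfinitePlace K, w (μ⁻¹ * y) = (w μ)⁻¹ * w y := by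
        intro w; rw [map_mul, map_inv₀]
      have hley : ∀ w : InfinitePlace K, w y ≤ w μ := by
        intro w
        have := hle w
        rw [hwy w] at this
        calc w y = w μ * ((w μ)⁻¹ * w y) := by
              rw [← mul_assoc, mul_inv_cancel₀ (ne_of_gt (hμpos w)), one_mul]
          _ ≤ w μ * 1 := mul_le_mul_of_nonneg_left this (le_of_lt (hμpos w))
          _ = w μ := mul_one _
      rcases hμm y hy𝔞 hley with hy0 | heq
      · left; rw [hy0, mul_zero]
      · right
        intro w
        rw [hwy w, heq w, inv_mul_cancel₀ (ne_of_gt (hμpos w))]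
  refine ⟨⟨μ, ⟨hμ𝔞, hμ0, hμm⟩, hred⟩, ?_⟩
  exact ⟨FractionalIdeal.spanSingleton (𝓞 K)⁰ μ⁻¹ * 𝔞, ⟨μ, hμ0, rfl⟩, hred⟩
end

section
/- Let K be a number field, 𝔟 a nonzero fractional ideal of 𝒪_K, and t = (t₁, …, tₙ) ∈ ℝⁿ. Then: (i) there exists ℓ* ∈ ℝ such that B(𝔟, (t, ℓ*)) ∖ {0} is nonempty and B(𝔟, (t, ℓ)) ∖ {0} is empty for every ℓ < ℓ*; (ii) B(𝔟, (t, ℓ*)) ∖ {0} contains an element that is smallest with respect to the preorder ≼; (iii) for any μ ∈ B(𝔟, (t, ℓ*)) ∖ {0} that is smallest with respect to ≼, the pair ((1/μ)𝔟, (t₁ − log w₁(μ), …, tₙ − log wₙ(μ))) is an f-representation. -/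
open NumberField
open scoped nonZeroDivisors

/-- Lexicographic comparison of real tuples: `a ≤ₗₑₓ b`. -/
def lexLe {m : ℕ} (a b : Fin m → ℝ) : Prop :=
  a = b ∨ ∃ i : Fin m, a i < b i ∧ ∀ j : Fin m, j < i → a j = b j

/-- The vector of absolute values of `h` at the infinite places, the distinguished place `w₀`
first. -/
def absVec {K : Type*} [Field K] [NumberField K] {n : ℕ}
    (w₀ : InfinitePlace K) (w : Fin n → InfinitePlace K) (h : K) : Fin (n + 1) → ℝ :=
  Fin.cons (w₀ h) (fun i => w i h)

/-- The total preorder `≼` on `K^*`: `h ≼ h'` iff the vector of absolute values of `h` is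
lexicographically at most that of `h'` (distinguished place first). -/
def preceq {K : Type*} [Field K] [NumberField K] {n : ℕ}
    (w₀ : InfinitePlace K) (w : Fin n → InfinitePlace K) (h h' : K) : Prop :=
  lexLe (absVec w₀ w h) (absVec w₀ w h')

/-- The box `B(𝔟, (t, ℓ)) = {h ∈ 𝔟 : w₀(h) ≤ exp ℓ and wᵢ(h) ≤ exp tᵢ for 1 ≤ i ≤ n}`. -/
def box {K : Type*} [Field K] [NumberField K] {n : ℕ}
    (w₀ : InfinitePlace K) (w : Fin n → InfinitePlace K)
    (𝔟 : FractionalIdeal (𝓞 K)⁰ K) (t : Fin n → ℝ) (ℓ : ℝ) : Set K :=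
  {h : K | h ∈ 𝔟 ∧ w₀ h ≤ Real.exp ℓ ∧ ∀ i : Fin n, w i h ≤ Real.exp (t i)}

/-- A pair `(𝔟, t)` is an *f-representation* if `1 ∈ B(𝔟, (t, 0))` and `1` is a smallest
element of `B(𝔟, (t, 0)) ∖ {0}` with respect to `≼`. -/
def IsFRep {K : Type*} [Field K] [NumberField K] {n : ℕ}
    (w₀ : InfinitePlace K) (w : Fin n → InfinitePlace K)
    (𝔟 : FractionalIdeal (𝓞 K)⁰ K) (t : Fin n → ℝ) : Prop :=
  (1 : K) ∈ box w₀ w 𝔟 t 0 ∧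
  ∀ h ∈ box w₀ w 𝔟 t 0, h ≠ 0 → preceq w₀ w 1 h

theorem lexLe_refl {m : ℕ} (a : Fin m → ℝ) : lexLe a a := Or.inl rfl

theorem lexLe_trans {m : ℕ} {a b c : Fin m → ℝ} (h1 : lexLe a b) (h2 : lexLe b c) :
    lexLe a c := by
  rcases h1 with rfl | ⟨i, hi, hj⟩
  · exact h2
  rcases h2 with rfl | ⟨i₂, hi₂, hj₂⟩
  · exact Or.inr ⟨i, hi, hj⟩
  rcases lt_trichotomy i i₂ with H | rfl | H
  · exact Or.inr ⟨i, (hj₂ i H) ▸ hi, fun j hj' => (hj j hj').trans (hj₂ j (hj'.trans H))⟩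
  · exact Or.inr ⟨i, hi.trans hi₂, fun j hj' => (hj j hj').trans (hj₂ j hj')⟩
  · exact Or.inr ⟨i₂, (hj i₂ H) ▸ hi₂, fun j hj' => (hj j (hj'.trans H)).trans (hj₂ j hj')⟩

theorem lexLe_total {m : ℕ} (a b : Fin m → ℝ) : lexLe a b ∨ lexLe b a := by
  classical
  by_cases h : a = b
  · exact Or.inl (Or.inl h)
  have hne : ∃ j, a j ≠ b j := Function.ne_iff.mp h
  set s : Finset (Fin m) := Finset.univ.filter (fun j => a j ≠ b j) with hs
  have hsne : s.Nonempty := by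
    obtain ⟨j, hj⟩ := hne
    exact ⟨j, by simp [hs, hj]⟩
  set i := s.min' hsne with hi
  have hmem : a i ≠ b i := by
    have := s.min'_mem hsne
    simpa [hs] using this
  have hbefore : ∀ j, j < i → a j = b j := by
    intro j hj
    by_contra hja
    exact absurd (s.min'_le j (by simp [hs, hja])) (not_le.mpr hj)
  rcases hmem.lt_or_gt with H | H
  · exact Or.inl (Or.inr ⟨i, H, hbefore⟩)
  · exact Or.inr (Or.inr ⟨i, H, fun j hj => (hbefore j hj).symm⟩)

theorem exists_lexLe_min {m : ℕ} {α : Type*} (f : α → Fin m → ℝ) (s : Finset α)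
    (h : s.Nonempty) : ∃ a ∈ s, ∀ b ∈ s, lexLe (f a) (f b) := by
  classical
  induction s using Finset.induction_on with
  | empty => exact absurd h (by simp)
  | @insert x s hx ih =>
    rcases s.eq_empty_or_nonempty with rfl | hs
    · exact ⟨x, by simp, fun b hb => by
        rw [Finset.mem_insert] at hb
        rcases hb with rfl | hb
        · exact lexLe_refl _
        · simp at hb⟩
    · obtain ⟨c, hc, hcmin⟩ := ih hs
      rcases lexLe_total (f x) (f c) with H | H
      · refine ⟨x, Finset.mem_insert_self _ _, fun b hb => ?_⟩
        rcases Finset.mem_insert.mp hb with rfl | hb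
        · exact lexLe_refl _
        · exact lexLe_trans H (hcmin b hb)
      · refine ⟨c, Finset.mem_insert_of_mem hc, fun b hb => ?_⟩
        rcases Finset.mem_insert.mp hb with rfl | hb
        · exact H
        · exact hcmin b hb

open NumberField.mixedEmbedding NNReal in
theorem exists_int_small (K : Type*) [Field K] [NumberField K] (w₀ : InfinitePlace K)
    {f : InfinitePlace K → ℝ≥0} (hf : ∀ w, w ≠ w₀ → f w ≠ 0) :
    ∃ y : 𝓞 K, y ≠ 0 ∧ ∀ w : InfinitePlace K, w ≠ w₀ → w (y : K) < f w := by
  classical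
  set c := convexBodyLTFactor K with hcdef
  set B : ℝ≥0 := (minkowskiBound K 1).toNNReal / c + 1 with hBdef
  have hc : c ≠ 0 := convexBodyLTFactor_ne_zero K
  have hB : minkowskiBound K 1 < (↑(c * B) : ENNReal) := by
    have h1 : (c : ℝ≥0) * B = (minkowskiBound K 1).toNNReal + c := by
      rw [hBdef, mul_add, mul_one, mul_div_cancel₀ _ hc]
    rw [h1, ENNReal.coe_add, ENNReal.coe_toNNReal (minkowskiBound_lt_top K 1).ne]
    exact ENNReal.lt_add_right (minkowskiBound_lt_top K 1).ne (by exact_mod_cast hc)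
  obtain ⟨g, h_geqf, h_gprod⟩ := adjust_f K B hf
  obtain ⟨y, h_ynz, h_yle⟩ := exists_ne_zero_mem_ringOfIntegers_lt K (f := g) (by
    rw [convexBodyLT_volume]
    convert hB
    rw [← ENNReal.coe_mul]
    exact congrArg (fun x : NNReal => (x : ENNReal)) (by rw [h_gprod])
    )
  exact ⟨y, h_ynz, fun w hw => (h_geqf w hw ▸ h_yle w)⟩


theorem box_finite {K : Type*} [Field K] [NumberField K] {n : ℕ}
    (w₀ : InfinitePlace K) (w : Fin n → InfinitePlace K)
    (hw : Function.Surjective (Fin.cons w₀ w : Fin (n + 1) → InfinitePlace K))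
    (𝔟 : FractionalIdeal (𝓞 K)⁰ K) (t : Fin n → ℝ) (ℓ : ℝ) :
    (box w₀ w 𝔟 t ℓ).Finite := by
  classical
  obtain ⟨d, hd, hdi⟩ := 𝔟.2
  have hd0 : (d : K) ≠ 0 :=
    RingOfIntegers.coe_ne_zero_iff.mpr (nonZeroDivisors.ne_zero hd)
  set B₀ : ℝ := Real.exp ℓ + ∑ i : Fin n, Real.exp (t i) with hB₀
  set D : ℝ := ∑ v : InfinitePlace K, v (d : K) with hD
  have hDle : ∀ v : InfinitePlace K, v (d : K) ≤ D := fun v =>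
    Finset.single_le_sum (f := fun v : InfinitePlace K => v (d : K))
      (fun v _ => AbsoluteValue.nonneg _ _) (Finset.mem_univ v)
  have hbound : ∀ x ∈ box w₀ w 𝔟 t ℓ, ∀ v : InfinitePlace K, v x ≤ B₀ := by
    intro x hx v
    obtain ⟨j, hj⟩ := hw v
    induction j using Fin.cases with
    | zero =>
      rw [Fin.cons_zero] at hj
      subst hj
      exact le_add_of_le_of_nonneg hx.2.1
        (Finset.sum_nonneg (fun i _ => (Real.exp_pos _).le))
    | succ i =>
      rw [Fin.cons_succ] at hj
      subst hj
      refine le_add_of_nonneg_of_le (Real.exp_pos _).le ?_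
      exact le_trans (hx.2.2 i)
        (Finset.single_le_sum (fun i _ => (Real.exp_pos (t i)).le) (Finset.mem_univ i))
  have hS : {x : K | IsIntegral ℤ x ∧ ∀ φ : K →+* ℂ, ‖φ x‖ ≤ D * B₀}.Finite :=
    NumberField.Embeddings.finite_of_norm_le K ℂ (D * B₀)
  refine Set.Finite.subset (Set.Finite.preimage
    ((mul_right_injective₀ hd0).injOn) hS) ?_
  intro x hx
  simp only [Set.mem_preimage, Set.mem_setOf_eq]
  constructor
  · obtain ⟨y, hy⟩ := hdi x hx.1
    rw [show (d : K) * x = algebraMap (𝓞 K) K y by rw [hy, Algebra.smul_def]]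
    exact RingOfIntegers.isIntegral_coe y
  · intro φ
    have h1 : ‖φ ((d : K) * x)‖ = (InfinitePlace.mk φ) ((d : K) * x) := by
      rw [InfinitePlace.apply]
    rw [h1, map_mul]
    exact mul_le_mul (hDle (InfinitePlace.mk φ)) (hbound x hx (InfinitePlace.mk φ))
      (AbsoluteValue.nonneg _ _)
      (le_trans (by positivity) (hDle (InfinitePlace.mk φ)))

theorem lexLe_one_of {m : ℕ} {v a : Fin m → ℝ} (hv : ∀ j, 0 < v j)
    (h : lexLe v (fun j => v j * a j)) : lexLe (fun _ => 1) a := by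
  rcases h with h | ⟨i, hlt, heq⟩
  · left
    funext j
    have h1 : v j * 1 = v j * a j := by rw [mul_one]; exact congrFun h j
    exact mul_left_cancel₀ (hv j).ne' h1
  · right
    refine ⟨i, ?_, fun j hj => ?_⟩
    · have h1 : v i * 1 < v i * a i := by rw [mul_one]; exact hlt
      exact (mul_lt_mul_iff_right₀ (hv i)).mp h1
    · have h1 : v j * 1 = v j * a j := by rw [mul_one]; exact heq j hj
      exact mul_left_cancel₀ (hv j).ne' h1

theorem absVec_mul {K : Type*} [Field K] [NumberField K] {n : ℕ}
    (w₀ : InfinitePlace K) (w : Fin n → InfinitePlace K) (x y : K) :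
    absVec w₀ w (x * y) = fun j => absVec w₀ w x j * absVec w₀ w y j := by
  funext j
  refine Fin.cases ?_ (fun i => ?_) j <;> simp [absVec, map_mul]

theorem absVec_one {K : Type*} [Field K] [NumberField K] {n : ℕ}
    (w₀ : InfinitePlace K) (w : Fin n → InfinitePlace K) :
    absVec w₀ w 1 = fun _ => (1 : ℝ) := by
  funext j
  refine Fin.cases ?_ (fun i => ?_) j <;> simp [absVec]

theorem absVec_pos {K : Type*} [Field K] [NumberField K] {n : ℕ}
    (w₀ : InfinitePlace K) (w : Fin n → InfinitePlace K) {x : K} (hx : x ≠ 0) :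
    ∀ j, 0 < absVec w₀ w x j := by
  intro j
  refine Fin.cases ?_ (fun i => ?_) j <;>
    simp [absVec, NumberField.InfinitePlace.pos_iff, hx]


/-- **Reduction.** Let `K` be a number field with infinite places enumerated as
`w₀, w₁, …, wₙ`, `𝔟` a nonzero fractional ideal of `𝒪_K`, and `t ∈ ℝⁿ`. Then: (i) there is a
smallest `ℓ*` with `B(𝔟, (t, ℓ*)) ∖ {0}` nonempty; (ii) this set has a `≼`-smallest element;
(iii) for any `≼`-smallest `μ` of this set, `((1/μ)𝔟, (tᵢ − log wᵢ(μ))ᵢ)` is an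
f-representation. -/
theorem stmt12 {K : Type*} [Field K] [NumberField K] {n : ℕ}
    (w₀ : InfinitePlace K) (w : Fin n → InfinitePlace K)
    (hw : Function.Bijective (Fin.cons w₀ w : Fin (n + 1) → InfinitePlace K))
    (𝔟 : FractionalIdeal (𝓞 K)⁰ K) (h𝔟 : 𝔟 ≠ 0) (t : Fin n → ℝ) :
    ∃ ℓstar : ℝ,
      (box w₀ w 𝔟 t ℓstar \ {0}).Nonempty ∧
      (∀ ℓ : ℝ, ℓ < ℓstar → box w₀ w 𝔟 t ℓ \ {0} = ∅) ∧
      (∃ μ ∈ box w₀ w 𝔟 t ℓstar \ {0},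
        ∀ h ∈ box w₀ w 𝔟 t ℓstar \ {0}, preceq w₀ w μ h) ∧
      ∀ μ ∈ box w₀ w 𝔟 t ℓstar \ {0},
        (∀ h ∈ box w₀ w 𝔟 t ℓstar \ {0}, preceq w₀ w μ h) →
        IsFRep w₀ w (FractionalIdeal.spanSingleton (𝓞 K)⁰ μ⁻¹ * 𝔟)
          (fun i => t i - Real.log (w i μ)) := by
  classical
  -- a nonzero element of 𝔟
  obtain ⟨x, hx𝔟, hx0⟩ : ∃ x ∈ 𝔟, x ≠ 0 := by
    by_contra hcon
    push_neg at hcon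
    exact h𝔟 (FractionalIdeal.eq_zero_iff.mpr hcon)
  set e : Fin (n + 1) ≃ InfinitePlace K := Equiv.ofBijective _ hw with he
  have hew0 : e 0 = w₀ := by
    rw [he, Equiv.ofBijective_apply, Fin.cons_zero]
  have hewi : ∀ i : Fin n, e i.succ = w i := fun i => by
    rw [he, Equiv.ofBijective_apply, Fin.cons_succ]
  have hwine : ∀ i : Fin n, w i ≠ w₀ := by
    intro i hcontra
    have : e i.succ = e 0 := by rw [hewi i, hew0, hcontra]
    exact Fin.succ_ne_zero i (e.injective this)
  -- choose f small at all places except w₀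
  set f : InfinitePlace K → NNReal := fun v =>
    (Fin.cons 1 (fun i => Real.toNNReal (Real.exp (t i) / (w i x))) : Fin (n+1) → NNReal)
      (e.symm v) with hfdef
  have hfwi : ∀ i : Fin n, f (w i) = Real.toNNReal (Real.exp (t i) / (w i x)) := by
    intro i
    have : e.symm (w i) = i.succ := e.symm_apply_eq.mpr (hewi i).symm
    rw [hfdef]
    simp only [this, Fin.cons_succ]
  have hfne : ∀ v : InfinitePlace K, v ≠ w₀ → f v ≠ 0 := by
    intro v hv
    rcases Fin.eq_zero_or_eq_succ (e.symm v) with h0 | ⟨i, hi⟩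
    · exfalso
      apply hv
      rw [← e.apply_symm_apply v, h0, hew0]
    · have hv' : v = w i := by rw [← e.apply_symm_apply v, hi, hewi]
      rw [hv', hfwi i]
      refine (Real.toNNReal_pos.mpr ?_).ne'
      exact div_pos (Real.exp_pos _) (NumberField.InfinitePlace.pos_iff.mpr hx0)
  obtain ⟨y, hy0, hylt⟩ := exists_int_small K w₀ hfne
  set h : K := (y : K) * x with hh
  have hy0K : (y : K) ≠ 0 := RingOfIntegers.coe_ne_zero_iff.mpr hy0
  have hh0 : h ≠ 0 := mul_ne_zero hy0K hx0
  have hh𝔟 : h ∈ 𝔟 := by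
    have := Submodule.smul_mem (𝔟 : Submodule (𝓞 K) K) y hx𝔟
    rwa [Algebra.smul_def] at this
  have hhi : ∀ i : Fin n, w i h ≤ Real.exp (t i) := by
    intro i
    have h1 := hylt (w i) (hwine i)
    rw [hfwi i, Real.coe_toNNReal _ (le_of_lt (div_pos (Real.exp_pos _)
      (NumberField.InfinitePlace.pos_iff.mpr hx0)))] at h1
    have h2 : w i (y : K) * w i x < Real.exp (t i) :=
      (lt_div_iff₀ (NumberField.InfinitePlace.pos_iff.mpr hx0)).mp h1
    rw [hh, map_mul]
    exact h2.le
  set ℓ₀ : ℝ := Real.log (w₀ h) with hℓ₀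
  have hw₀h : 0 < w₀ h := NumberField.InfinitePlace.pos_iff.mpr hh0
  set F : Set K := box w₀ w 𝔟 t ℓ₀ \ {0} with hF
  have hFfin : F.Finite := (box_finite w₀ w hw.2 𝔟 t ℓ₀).subset Set.diff_subset
  have hhF : h ∈ F := ⟨⟨hh𝔟, by rw [Real.exp_log hw₀h], hhi⟩, by simpa using hh0⟩
  obtain ⟨μ₀, hμ₀F, hμ₀min⟩ :=
    Set.exists_min_image F (fun z => Real.log (w₀ z)) hFfin ⟨h, hhF⟩
  set ℓstar : ℝ := Real.log (w₀ μ₀) with hℓstar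
  have hμ₀0 : μ₀ ≠ 0 := by simpa using hμ₀F.2
  have hw₀μ₀ : 0 < w₀ μ₀ := NumberField.InfinitePlace.pos_iff.mpr hμ₀0
  have hls_le : ℓstar ≤ ℓ₀ :=
    (Real.log_le_iff_le_exp hw₀μ₀).mpr hμ₀F.1.2.1
  have hμ₀star : μ₀ ∈ box w₀ w 𝔟 t ℓstar \ {0} :=
    ⟨⟨hμ₀F.1.1, by rw [Real.exp_log hw₀μ₀], hμ₀F.1.2.2⟩, by simpa using hμ₀0⟩
  have hsubF : box w₀ w 𝔟 t ℓstar \ {0} ⊆ F := by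
    intro z hz
    exact ⟨⟨hz.1.1, le_trans hz.1.2.1 (Real.exp_le_exp.mpr hls_le), hz.1.2.2⟩, hz.2⟩
  have hempty : ∀ ℓ : ℝ, ℓ < ℓstar → box w₀ w 𝔟 t ℓ \ {0} = ∅ := by
    intro ℓ hℓ
    rw [Set.eq_empty_iff_forall_notMem]
    intro z hz
    have hz0 : z ≠ 0 := by simpa using hz.2
    have hw₀z : 0 < w₀ z := NumberField.InfinitePlace.pos_iff.mpr hz0
    have hzF : z ∈ F := by
      refine ⟨⟨hz.1.1, le_trans hz.1.2.1 (Real.exp_le_exp.mpr ?_), hz.1.2.2⟩, hz.2⟩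
      exact le_trans (le_of_lt hℓ) hls_le
    have h1 : ℓstar ≤ Real.log (w₀ z) := hμ₀min z hzF
    have h2 : Real.log (w₀ z) ≤ ℓ := (Real.log_le_iff_le_exp hw₀z).mpr hz.1.2.1
    linarith
  refine ⟨ℓstar, ⟨μ₀, hμ₀star⟩, hempty, ?_, ?_⟩
  · -- existence of a smallest element
    have hfin : (box w₀ w 𝔟 t ℓstar \ {0}).Finite := hFfin.subset hsubF
    obtain ⟨μ, hμ, hmin⟩ := exists_lexLe_min (fun z => absVec w₀ w z) hfin.toFinset
      (by rw [Set.Finite.toFinset_nonempty]; exact ⟨μ₀, hμ₀star⟩)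
    exact ⟨μ, hfin.mem_toFinset.mp hμ,
      fun z hz => hmin z (hfin.mem_toFinset.mpr hz)⟩
  · -- any smallest element gives an f-representation
    intro μ hμ hμmin
    have hμ0 : μ ≠ 0 := by simpa using hμ.2
    have hμ𝔟 : μ ∈ 𝔟 := hμ.1.1
    have hwiμ : ∀ i : Fin n, 0 < w i μ :=
      fun i => NumberField.InfinitePlace.pos_iff.mpr hμ0
    constructor
    · refine ⟨?_, by simp, ?_⟩
      · exact FractionalIdeal.mem_singleton_mul.mpr ⟨μ, hμ𝔟, (inv_mul_cancel₀ hμ0).symm⟩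
      · intro i
        rw [map_one, Real.exp_sub, Real.exp_log (hwiμ i)]
        exact (one_le_div (hwiμ i)).mpr (hμ.1.2.2 i)
    · intro z hz hz0
      obtain ⟨y', hy', hzy⟩ := FractionalIdeal.mem_singleton_mul.mp hz.1
      have hμz𝔟 : μ * z ∈ 𝔟 := by
        rw [hzy, ← mul_assoc, mul_inv_cancel₀ hμ0, one_mul]
        exact hy'
      have hμzbox : μ * z ∈ box w₀ w 𝔟 t ℓstar \ {0} := by
        refine ⟨⟨hμz𝔟, ?_, ?_⟩, by simpa using mul_ne_zero hμ0 hz0⟩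
        · rw [map_mul]
          calc w₀ μ * w₀ z ≤ w₀ μ * 1 := by
                have := hz.2.1
                rw [Real.exp_zero] at this
                exact mul_le_mul_of_nonneg_left this (AbsoluteValue.nonneg _ _)
            _ = w₀ μ := mul_one _
            _ ≤ Real.exp ℓstar := hμ.1.2.1
        · intro i
          rw [map_mul]
          have h1 : w i z ≤ Real.exp (t i) / w i μ := by
            have := hz.2.2 i
            rwa [Real.exp_sub, Real.exp_log (hwiμ i)] at this
          calc w i μ * w i z ≤ w i μ * (Real.exp (t i) / w i μ) :=
                mul_le_mul_of_nonneg_left h1 (AbsoluteValue.nonneg _ _)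
            _ = Real.exp (t i) := by
                rw [mul_comm, div_mul_cancel₀ _ (hwiμ i).ne']
      have hkey : lexLe (absVec w₀ w μ) (fun j => absVec w₀ w μ j * absVec w₀ w z j) := by
        have := hμmin (μ * z) hμzbox
        rwa [preceq, absVec_mul] at this
      have : lexLe (fun _ => (1 : ℝ)) (absVec w₀ w z) :=
        lexLe_one_of (absVec_pos w₀ w hμ0) hkey
      rw [preceq, absVec_one]
      exact this
end

section
/- Let K be a number field, let (𝔟, (t₁, …, tₙ)) be an f-representation, and let μ ∈ K^* be such that ((1/μ)𝔟, (t₁ − log w₁(μ), …, tₙ − log wₙ(μ))) is also an f-representation. Then w(μ) = 1 for every infinite place w of K (including w₀); in particular the two f-representations coincide up to the equivalence 𝔟 ∼ (1/μ)𝔟 and have equal second components. -/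
open NumberField
open scoped nonZeroDivisors

/-- Two nonzero fractional ideals are *equivalent* if they differ by a principal ideal whose
generator has absolute value `1` at every infinite place. -/
def EquivIdeal {K : Type*} [Field K] [NumberField K]
    (𝔟 𝔟' : FractionalIdeal (𝓞 K)⁰ K) : Prop :=
  ∃ h : K, h ≠ 0 ∧ 𝔟 = FractionalIdeal.spanSingleton (𝓞 K)⁰ h * 𝔟' ∧
    ∀ v : InfinitePlace K, v h = 1


private lemma mem_spanSingleton_mul' {K : Type*} [Field K] [NumberField K]
    {z x : K} {I : FractionalIdeal (𝓞 K)⁰ K} :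
    x ∈ FractionalIdeal.spanSingleton (𝓞 K)⁰ z * I ↔ ∃ y ∈ I, z * y = x := by
  rw [← FractionalIdeal.mem_coe, FractionalIdeal.coe_mul,
    FractionalIdeal.coe_spanSingleton, Submodule.mem_span_singleton_mul]
  simp [FractionalIdeal.mem_coe]

/-- **Uniqueness.** Let `K` be a number field with infinite places
`w₀, w₁, …, wₙ`, let `(𝔟, t)` be an f-representation, and `μ ∈ K^*` such that
`((1/μ)𝔟, (tᵢ − log wᵢ(μ))ᵢ)` is also an f-representation. Then `v(μ) = 1` for every
infinite place `v`; in particular `𝔟 ∼ (1/μ)𝔟` and the second components coincide. -/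
theorem stmt13 {K : Type*} [Field K] [NumberField K] {n : ℕ}
    (w₀ : InfinitePlace K) (w : Fin n → InfinitePlace K)
    (hw : Function.Bijective (Fin.cons w₀ w : Fin (n + 1) → InfinitePlace K))
    (𝔟 : FractionalIdeal (𝓞 K)⁰ K) (h𝔟 : 𝔟 ≠ 0) (t : Fin n → ℝ)
    (μ : K) (hμ : μ ≠ 0)
    (h1 : IsFRep w₀ w 𝔟 t)
    (h2 : IsFRep w₀ w (FractionalIdeal.spanSingleton (𝓞 K)⁰ μ⁻¹ * 𝔟)
      (fun i => t i - Real.log (w i μ))) :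
    (∀ v : InfinitePlace K, v μ = 1) ∧
    EquivIdeal 𝔟 (FractionalIdeal.spanSingleton (𝓞 K)⁰ μ⁻¹ * 𝔟) ∧
    (fun i => t i - Real.log (w i μ)) = t := by
  classical
  have hμinv : μ⁻¹ ≠ 0 := inv_ne_zero hμ
  have hpos : ∀ v : InfinitePlace K, 0 < v μ := fun v => NumberField.InfinitePlace.pos_iff.mpr hμ
  have habs1 : absVec w₀ w (1 : K) = fun _ => 1 := by
    funext k
    refine Fin.cases ?_ ?_ k <;> simp [absVec]
  have habsinv : ∀ k, absVec w₀ w μ⁻¹ k = (absVec w₀ w μ k)⁻¹ := by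
    intro k
    refine Fin.cases ?_ ?_ k <;> simp [absVec, map_inv₀]
  have h1mem : (1 : K) ∈ 𝔟 := h1.1.1
  have hμmem : μ ∈ 𝔟 := by
    obtain ⟨y, hy, hxy⟩ := mem_spanSingleton_mul'.mp h2.1.1
    have hy' : y = μ := by field_simp at hxy; exact hxy
    rwa [hy'] at hy
  have hinvmem : μ⁻¹ ∈ FractionalIdeal.spanSingleton (𝓞 K)⁰ μ⁻¹ * 𝔟 :=
    mem_spanSingleton_mul'.mpr ⟨1, h1mem, mul_one _⟩
  have htpos : ∀ i, (1 : ℝ) ≤ Real.exp (t i) := fun i => by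
    simpa using h1.1.2.2 i
  have hμle : ∀ i, w i μ ≤ Real.exp (t i) := by
    intro i
    have h := h2.1.2.2 i
    rw [map_one, Real.exp_sub, Real.exp_log (hpos (w i)), le_div_iff₀ (hpos (w i)),
      one_mul] at h
    exact h
  have hinvle : ∀ i, w i μ⁻¹ ≤ Real.exp (t i - Real.log (w i μ)) := by
    intro i
    rw [map_inv₀, Real.exp_sub, Real.exp_log (hpos (w i)), inv_eq_one_div]
    gcongr
    exact htpos i
  have hμbox : w₀ μ ≤ 1 → preceq w₀ w 1 μ := fun h =>
    h1.2 μ ⟨hμmem, by simpa using h, hμle⟩ hμ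
  have hinvbox : (w₀ μ)⁻¹ ≤ 1 → preceq w₀ w 1 μ⁻¹ := fun h =>
    h2.2 μ⁻¹ ⟨hinvmem, by simpa [map_inv₀] using h, hinvle⟩ hμinv
  have hw0 : w₀ μ = 1 := by
    rcases le_total (w₀ μ) 1 with h | h
    · have P := hμbox h
      unfold preceq lexLe at P
      rw [habs1] at P
      rcases P with heq | ⟨i, hi, hji⟩
      · have := congrFun heq 0
        simp [absVec] at this
        linarith
      · by_cases hi0 : i = 0
        · subst hi0
          simp [absVec] at hi
          linarith
        · have := hji 0 (Fin.pos_of_ne_zero hi0)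
          simp [absVec] at this
          linarith
    · have P := hinvbox (inv_le_one_of_one_le₀ h)
      unfold preceq lexLe at P
      rw [habs1] at P
      rcases P with heq | ⟨i, hi, hji⟩
      · have := congrFun heq 0
        simp [absVec, map_inv₀] at this
        linarith
      · by_cases hi0 : i = 0
        · subst hi0
          simp [absVec, map_inv₀] at hi
          have : w₀ μ < 1 := by
            have h' := (one_lt_inv_iff₀).mp hi
            exact h'.2
          linarith
        · have h0 := hji 0 (Fin.pos_of_ne_zero hi0)
          simp [absVec, map_inv₀] at h0
          linarith
  have hall : ∀ k, absVec w₀ w μ k = 1 := by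
    have P := hμbox (le_of_eq hw0)
    have Q := hinvbox (by rw [hw0]; norm_num)
    unfold preceq lexLe at P Q
    rw [habs1] at P Q
    rcases P with hP | ⟨i, hi, hji⟩
    · intro k; exact (congrFun hP k).symm
    · rcases Q with hQ | ⟨i', hi', hji'⟩
      · intro k
        have := congrFun hQ k
        rw [habsinv] at this
        exact inv_eq_one.mp this.symm
      · exfalso
        simp only at hi hi'
        rw [habsinv] at hi'
        rcases lt_trichotomy i i' with h | h | h
        · have h0 := hji' i h
          simp only at h0
          rw [habsinv] at h0
          have := inv_eq_one.mp h0.symm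
          linarith
        · subst h
          have : (absVec w₀ w μ i)⁻¹ < 1 := inv_lt_one_of_one_lt₀ hi
          linarith
        · have h0 := hji i' h
          simp only at h0
          rw [← h0] at hi'
          norm_num at hi'
  have hvall : ∀ v : InfinitePlace K, v μ = 1 := by
    intro v
    obtain ⟨k, hk⟩ := hw.2 v
    rw [← hk]
    refine Fin.cases ?_ ?_ k
    · simpa [absVec] using hall 0
    · intro i
      simpa [absVec] using hall i.succ
  refine ⟨hvall, ⟨μ, hμ, ?_, hvall⟩, ?_⟩
  · rw [← mul_assoc, FractionalIdeal.spanSingleton_mul_spanSingleton,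
      mul_inv_cancel₀ hμ, FractionalIdeal.spanSingleton_one, one_mul]
  · funext i
    rw [hvall (w i), Real.log_one, sub_zero]
end

section
/- Let K be a number field whose distinguished infinite place w₀ is real. Then a pair (𝔟, t), with 𝔟 a nonzero fractional ideal of 𝒪_K and t ∈ ℝⁿ, is an f-representation if and only if B(𝔟, (t, 0)) = {−1, 0, 1}. -/
open NumberField
open scoped nonZeroDivisors

/-- Let `K` be a number field whose distinguished infinite place `w₀` is
real. Then `(𝔟, t)` is an f-representation if and only if `B(𝔟, (t, 0)) = {−1, 0, 1}`. -/
theorem stmt15 {K : Type*} [Field K] [NumberField K] {n : ℕ}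
    (w₀ : InfinitePlace K) (hw₀ : w₀.IsReal) (w : Fin n → InfinitePlace K)
    (hw : Function.Bijective (Fin.cons w₀ w : Fin (n + 1) → InfinitePlace K))
    (𝔟 : FractionalIdeal (𝓞 K)⁰ K) (h𝔟 : 𝔟 ≠ 0) (t : Fin n → ℝ) :
    IsFRep w₀ w 𝔟 t ↔ box w₀ w 𝔟 t 0 = {-1, 0, 1} := by
  have hneg : ∀ (v : InfinitePlace K) (x : K), v (-x) = v x := fun v x => v.1.map_neg x
  constructor
  · rintro ⟨⟨h1mem, h1w0, h1wi⟩, hmin⟩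
    ext h
    simp only [Set.mem_insert_iff, Set.mem_singleton_iff]
    constructor
    · intro hh
      by_cases hh0 : h = 0
      · tauto
      · have hle := hmin h hh hh0
        -- deduce w₀ h = 1
        have hw0h : w₀ h = 1 := by
          rcases hle with heq | ⟨i, hi, hj⟩
          · have := congrFun heq 0
            simpa [absVec, map_one] using this.symm
          · rcases eq_or_ne i 0 with rfl | hi0
            · exfalso
              have : (1 : ℝ) < w₀ h := by simpa [absVec, map_one] using hi
              have : w₀ h ≤ 1 := by simpa [Real.exp_zero] using hh.2.1
              linarith
            · have h0i : (0 : Fin (n + 1)) < i := by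
                exact lt_of_le_of_ne (Fin.zero_le i) (Ne.symm hi0)
              have := hj 0 h0i
              simpa [absVec, map_one] using this.symm
        -- use reality of w₀
        have habs : |NumberField.InfinitePlace.embedding_of_isReal hw₀ h| = 1 := by
          rw [← Real.norm_eq_abs, NumberField.InfinitePlace.norm_embedding_of_isReal, hw0h]
        rcases abs_eq (by norm_num : (0:ℝ) ≤ 1) |>.mp habs with h1 | h1
        · right; right
          have : NumberField.InfinitePlace.embedding_of_isReal hw₀ h
              = NumberField.InfinitePlace.embedding_of_isReal hw₀ 1 := by
            simpa using h1
          exact (NumberField.InfinitePlace.embedding_of_isReal hw₀).injective this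
        · left
          have : NumberField.InfinitePlace.embedding_of_isReal hw₀ h
              = NumberField.InfinitePlace.embedding_of_isReal hw₀ (-1) := by
            simpa using h1
          exact (NumberField.InfinitePlace.embedding_of_isReal hw₀).injective this
    · rintro (rfl | rfl | rfl)
      · exact ⟨Submodule.neg_mem _ h1mem, by simpa [hneg] using h1w0,
          fun i => by simpa [hneg] using h1wi i⟩
      · exact ⟨Submodule.zero_mem _, by simp [Real.exp_pos 0 |>.le], fun i => by simp [Real.exp_pos _ |>.le]⟩
      · exact ⟨h1mem, h1w0, h1wi⟩
  · intro hbox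
    have h1mem : (1 : K) ∈ box w₀ w 𝔟 t 0 := by rw [hbox]; simp
    refine ⟨h1mem, fun h hh hh0 => ?_⟩
    rw [hbox] at hh
    rcases hh with rfl | rfl | rfl
    · left
      funext i
      refine Fin.cases ?_ ?_ i
      · simp [absVec, hneg]
      · intro j; simp [absVec, hneg]
    · exact absurd rfl hh0
    · left; rfl
end

section
/- Let K be a number field of discriminant Δ_K with exactly s pairs of complex embeddings (i.e., s complex infinite places), and let (𝔟, (t₁, …, tₙ)) be an f-representation. Then 𝒪_K ⊆ 𝔟 (equivalently, 𝔟⁻¹ is an integral ideal), tᵢ ≥ 0 for all 1 ≤ i ≤ n, and 0 ≤ −log N(𝔟) + Σᵢ₌₁ⁿ tᵢ·deg(wᵢ) ≤ (1/2)·log|Δ_K| − s·log(π/2), where N(𝔟) is the absolute norm of the fractional ideal 𝔟 and deg(w) = 1 if the infinite place w is real and deg(w) = 2 if w is complex. -/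
open NumberField
open scoped nonZeroDivisors

/-- Let `K` be a number field of discriminant `Δ_K` with `s` complex infinite
places, and let `(𝔟, (t₁, …, tₙ))` be an f-representation. Then `𝒪_K ⊆ 𝔟`, `tᵢ ≥ 0` for all
`i`, and `0 ≤ −log N(𝔟) + Σᵢ tᵢ·deg(wᵢ) ≤ (1/2)·log |Δ_K| − s·log(π/2)`, where `deg(w)` is
`1` for a real place and `2` for a complex one (the multiplicity `mult`). -/
theorem stmt16 {K : Type*} [Field K] [NumberField K] {n : ℕ}
    (w₀ : InfinitePlace K) (w : Fin n → InfinitePlace K)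
    (hw : Function.Bijective (Fin.cons w₀ w : Fin (n + 1) → InfinitePlace K))
    (𝔟 : FractionalIdeal (𝓞 K)⁰ K) (h𝔟 : 𝔟 ≠ 0) (t : Fin n → ℝ)
    (hfrep : IsFRep w₀ w 𝔟 t) :
    (1 : FractionalIdeal (𝓞 K)⁰ K) ≤ 𝔟 ∧ (∀ i : Fin n, 0 ≤ t i) ∧
    0 ≤ -Real.log ((FractionalIdeal.absNorm 𝔟 : ℚ) : ℝ) +
        ∑ i : Fin n, t i * ((w i).mult : ℝ) ∧
    -Real.log ((FractionalIdeal.absNorm 𝔟 : ℚ) : ℝ) +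
        ∑ i : Fin n, t i * ((w i).mult : ℝ) ≤
      (1 / 2) * Real.log |((NumberField.discr K : ℤ) : ℝ)| -
        (NumberField.InfinitePlace.nrComplexPlaces K : ℝ) * Real.log (Real.pi / 2) := by

  classical
  obtain ⟨⟨h1mem, -, h1t⟩, hmin⟩ := hfrep
  -- Part 1 : `1 ≤ 𝔟`
  have hle : (1 : FractionalIdeal (𝓞 K)⁰ K) ≤ 𝔟 := FractionalIdeal.one_le.mpr h1mem
  -- Part 2 : `0 ≤ t i`
  have ht : ∀ i : Fin n, 0 ≤ t i := by
    intro i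
    have h := h1t i
    rw [map_one, ← Real.exp_zero, Real.exp_le_exp] at h
    exact h
  -- Norm facts
  have hNposQ : 0 < (FractionalIdeal.absNorm 𝔟 : ℚ) := by
    refine lt_of_le_of_ne (FractionalIdeal.absNorm_nonneg 𝔟) ?_
    intro h
    exact h𝔟 (FractionalIdeal.absNorm_eq_zero_iff.mp h.symm)
  have hinv : 𝔟⁻¹ ≤ 1 := by
    have h := (mul_le_mul_of_nonneg_left hle (zero_le (a := 𝔟⁻¹)) : 𝔟⁻¹ * 1 ≤ 𝔟⁻¹ * 𝔟)
    simpa [inv_mul_cancel₀ h𝔟] using h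
  have hNleQ : (FractionalIdeal.absNorm 𝔟 : ℚ) ≤ 1 := by
    obtain ⟨J, hJ⟩ := FractionalIdeal.le_one_iff_exists_coeIdeal.mp hinv
    have hJne : J ≠ 0 := by
      intro h
      rw [h] at hJ
      exact inv_ne_zero h𝔟 (by simpa using hJ.symm)
    have h1le : (1 : ℚ) ≤ (Ideal.absNorm J : ℚ) := by
      have : Ideal.absNorm J ≠ 0 := by
        simpa [Ideal.absNorm_eq_zero_iff] using hJne
      exact_mod_cast Nat.one_le_iff_ne_zero.mpr this
    have hmul : FractionalIdeal.absNorm 𝔟 * FractionalIdeal.absNorm (𝔟⁻¹) = 1 := by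
      rw [← map_mul, mul_inv_cancel₀ h𝔟, FractionalIdeal.absNorm_one]
    rw [← hJ, FractionalIdeal.coeIdeal_absNorm] at hmul
    nlinarith
  set N : ℝ := ((FractionalIdeal.absNorm 𝔟 : ℚ) : ℝ) with hNdef
  have hNpos : 0 < N := by rw [hNdef]; exact_mod_cast hNposQ
  have hNle : N ≤ 1 := by rw [hNdef]; exact_mod_cast hNleQ
  have hlogN : Real.log N ≤ 0 := Real.log_nonpos hNpos.le hNle
  have hsum : 0 ≤ ∑ i : Fin n, t i * ((w i).mult : ℝ) :=
    Finset.sum_nonneg fun i _ => mul_nonneg (ht i) (Nat.cast_nonneg _)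
  refine ⟨hle, ht, by linarith, ?_⟩
  -- Part 4 : the Minkowski bound, by contradiction
  by_contra hcon
  push_neg at hcon
  set S : ℝ := ∑ i : Fin n, t i * ((w i).mult : ℝ) with hSdef
  set Δ : ℝ := |((NumberField.discr K : ℤ) : ℝ)| with hΔdef
  have hD : (0 : ℝ) < Δ := by
    rw [hΔdef]
    rw [abs_pos]
    exact_mod_cast NumberField.discr_ne_zero K
  set r₁ := NumberField.InfinitePlace.nrRealPlaces K
  set s := NumberField.InfinitePlace.nrComplexPlaces K
  -- the key real inequality obtained from `hcon`
  have h1 : Real.sqrt Δ / (Real.pi / 2) ^ s < N⁻¹ * Real.exp S := by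
    have h := Real.exp_lt_exp.mpr hcon
    rw [Real.exp_sub, Real.exp_add, Real.exp_neg, Real.exp_log hNpos] at h
    have e1 : Real.exp ((1 / 2) * Real.log Δ) = Real.sqrt Δ := by
      rw [show (1 / 2 : ℝ) * Real.log Δ = Real.log Δ / 2 by ring, ← Real.log_sqrt hD.le,
        Real.exp_log (Real.sqrt_pos.mpr hD)]
    have e2 : Real.exp ((s : ℝ) * Real.log (Real.pi / 2)) = (Real.pi / 2) ^ s := by
      rw [← Real.log_pow, Real.exp_log (by positivity)]
    rwa [e1, e2] at h
  have h2 : Real.sqrt Δ * N < Real.exp S * (Real.pi / 2) ^ s := by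
    rw [div_lt_iff₀ (by positivity)] at h1
    have := mul_lt_mul_of_pos_right h1 hNpos
    calc Real.sqrt Δ * N < N⁻¹ * Real.exp S * (Real.pi / 2) ^ s * N := this
      _ = Real.exp S * (Real.pi / 2) ^ s := by field_simp
  -- set up the convex body
  set e : Fin (n + 1) ≃ InfinitePlace K := Equiv.ofBijective _ hw with hedef
  set g : Fin (n + 1) → ℝ := Fin.cons 0 t with hgdef
  set f : InfinitePlace K → NNReal := fun v => (Real.exp (g (e.symm v))).toNNReal with hfdef
  have hfe : ∀ j : Fin (n + 1), ((f (e j) : ℝ)) = Real.exp (g j) := by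
    intro j
    rw [hfdef]
    simp [Real.coe_toNNReal _ (Real.exp_pos _).le]
  have he0 : e 0 = w₀ := by rw [hedef]; simp [Equiv.ofBijective_apply]
  have hesucc : ∀ i : Fin n, e i.succ = w i := by
    intro i; rw [hedef]; simp [Equiv.ofBijective_apply]
  have hprod : ∏ v : InfinitePlace K, ((f v : ℝ)) ^ (v.mult) = Real.exp S := by
    rw [← Equiv.prod_comp e (fun v => ((f v : ℝ)) ^ v.mult)]
    simp_rw [hfe]
    rw [Fin.prod_univ_succ, he0]
    have : g 0 = 0 := by rw [hgdef]; simp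
    rw [this, Real.exp_zero, one_pow, one_mul]
    rw [hSdef, Real.exp_sum]
    refine Finset.prod_congr rfl fun i _ => ?_
    rw [hesucc i, hgdef]
    simp only [Fin.cons_succ]
    rw [mul_comm (t i), Real.exp_nat_mul]
  set I : (FractionalIdeal (𝓞 K)⁰ K)ˣ := Units.mk0 𝔟 h𝔟 with hIdef
  have hIval : ((I : FractionalIdeal (𝓞 K)⁰ K)) = 𝔟 := rfl
  have hmb : (NumberField.mixedEmbedding.minkowskiBound K I).toReal =
      N * (2 : ℝ)⁻¹ ^ s * Real.sqrt Δ * 2 ^ (r₁ + 2 * s) := by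
    rw [NumberField.mixedEmbedding.minkowskiBound,
      NumberField.mixedEmbedding.volume_fundamentalDomain_fractionalIdealLatticeBasis,
      NumberField.mixedEmbedding.volume_fundamentalDomain_latticeBasis, hIval]
    simp only [ENNReal.toReal_mul, ENNReal.toReal_pow, ENNReal.toReal_inv, ENNReal.toReal_ofNat,
      ENNReal.coe_toReal, NumberField.mixedEmbedding.finrank]
    rw [ENNReal.toReal_ofReal (by exact_mod_cast hNposQ.le),
      ← NumberField.InfinitePlace.card_add_two_mul_card_eq_rank,
      Real.coe_sqrt, coe_nnnorm, Int.norm_eq_abs, ← hNdef, ← hΔdef]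
    ring
  have hvne : NumberField.mixedEmbedding.convexBodyLTFactor K ≠ 0 :=
    NumberField.mixedEmbedding.convexBodyLTFactor_ne_zero K
  have hvtop : MeasureTheory.volume (NumberField.mixedEmbedding.convexBodyLT K f) ≠ ⊤ := by
    rw [NumberField.mixedEmbedding.convexBodyLT_volume]
    exact ENNReal.mul_ne_top ENNReal.coe_ne_top ENNReal.coe_ne_top
  have hvb : (MeasureTheory.volume (NumberField.mixedEmbedding.convexBodyLT K f)).toReal =
      2 ^ r₁ * Real.pi ^ s * Real.exp S := by
    rw [NumberField.mixedEmbedding.convexBodyLT_volume, ENNReal.toReal_mul,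
      ENNReal.coe_toReal, ENNReal.coe_toReal]
    push_cast [NNReal.coe_real_pi]
    rw [hprod]
  have hvol : NumberField.mixedEmbedding.minkowskiBound K I <
      MeasureTheory.volume (NumberField.mixedEmbedding.convexBodyLT K f) := by
    rw [← ENNReal.toReal_lt_toReal (NumberField.mixedEmbedding.minkowskiBound_lt_top K I).ne hvtop,
      hmb, hvb]
    have hp2 : (0 : ℝ) < 2 ^ s := by positivity
    have hpr : (0 : ℝ) < 2 ^ r₁ := by positivity
    have h3 : (Real.pi / 2 : ℝ) ^ s * 2 ^ s = Real.pi ^ s := by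
      rw [div_pow]
      field_simp
    have key : Real.sqrt Δ * N * (2 ^ s * 2 ^ r₁) <
        Real.exp S * (Real.pi / 2) ^ s * (2 ^ s * 2 ^ r₁) :=
      mul_lt_mul_of_pos_right h2 (by positivity)
    calc N * (2 : ℝ)⁻¹ ^ s * Real.sqrt Δ * 2 ^ (r₁ + 2 * s)
        = Real.sqrt Δ * N * (2 ^ s * 2 ^ r₁) := by
          rw [pow_add, two_mul, pow_add, inv_pow]
          field_simp
      _ < Real.exp S * (Real.pi / 2) ^ s * (2 ^ s * 2 ^ r₁) := key
      _ = 2 ^ r₁ * Real.pi ^ s * Real.exp S := by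
          rw [div_pow]
          field_simp
  obtain ⟨a, ha, hane, halt⟩ := NumberField.mixedEmbedding.exists_ne_zero_mem_ideal_lt K I hvol
  have ha𝔟 : a ∈ 𝔟 := by rwa [hIdef, Units.val_mk0] at ha
  have haw0 : w₀ a < 1 := by
    have h := halt w₀
    have : e.symm w₀ = 0 := by rw [← he0, Equiv.symm_apply_apply]
    rw [hfdef] at h
    simp only [this] at h
    have hg0 : g 0 = 0 := by rw [hgdef]; simp
    rw [hg0, Real.exp_zero] at h
    simpa using h
  have hawi : ∀ i : Fin n, w i a ≤ Real.exp (t i) := by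
    intro i
    have h := halt (w i)
    have : e.symm (w i) = i.succ := by rw [← hesucc i, Equiv.symm_apply_apply]
    rw [hfdef] at h
    simp only [this] at h
    have hgs : g i.succ = t i := by rw [hgdef]; simp
    rw [hgs] at h
    rw [Real.coe_toNNReal _ (Real.exp_pos _).le] at h
    exact h.le
  have hbox : a ∈ box w₀ w 𝔟 t 0 :=
    ⟨ha𝔟, by rw [Real.exp_zero]; exact haw0.le, hawi⟩
  have hp := hmin a hbox hane
  rw [preceq, lexLe] at hp
  have habs0 : absVec w₀ w a 0 = w₀ a := by rw [absVec, Fin.cons_zero]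
  have h1abs0 : absVec w₀ w (1 : K) 0 = 1 := by rw [absVec, Fin.cons_zero, map_one]
  rcases hp with h | ⟨i, hi, hj⟩
  · have := congrFun h 0
    rw [habs0, h1abs0] at this
    rw [← this] at haw0
    exact absurd haw0 (lt_irrefl 1)
  · rcases eq_or_ne i 0 with rfl | hine
    · rw [habs0, h1abs0] at hi
      linarith
    · have h0 := hj 0 (Fin.pos_of_ne_zero hine)
      rw [habs0, h1abs0] at h0
      rw [← h0] at haw0
      exact absurd haw0 (lt_irrefl 1)
end
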